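/- Let G = (V, A) be a finite, weakly connected directed graph with strictly increasing, odd, continuous potential functions Φ_a that are additionally surjective. Then for every balanced load scenario d ∈ ℝ^V (i.e., ∑_u d_u = 0), there exist flows q ∈ ℝ^A and potentials π ∈ ℝ^V satisfying mass flow conservation with respect to d and the potential coupling π_u − π_v = Φ_a(q_a) for all arcs a = (u,v). -/

import Mathlib

/-- Mass flow conservation of a flow `q` with respect to a load scenario `d`. -/
def FlowCons {V A : Type} [Fintype A] [DecidableEq V]
    (src tgt : A → V) (q : A → ℝ) (d : V → ℝ) : Prop :=
  ∀ u : V,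
    (∑ a : A, if tgt a = u then q a else 0) -
      (∑ a : A, if src a = u then q a else 0) = d u

/-- Potential coupling `π_u − π_v = Φ_a(q_a)` on every arc. -/
def PotCoup {V A : Type} (src tgt : A → V) (Φ : A → ℝ → ℝ)
    (q : A → ℝ) (π : V → ℝ) : Prop :=
  ∀ a : A, π (src a) - π (tgt a) = Φ a (q a)

/-- Weak connectivity of the directed graph. -/
def WeakConn {V A : Type} (src tgt : A → V) : Prop :=
  ∀ u v : V, Relation.ReflTransGen
    (fun x y => ∃ a : A, (src a = x ∧ tgt a = y) ∨ (src a = y ∧ tgt a = x)) u v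

/-- Lower bound on the primitive of a monotone odd function vanishing at `0`. -/
lemma primitive_lower {ψ : ℝ → ℝ} (hc : Continuous ψ) (hm : Monotone ψ)
    (h0 : ψ 0 = 0) (hodd : ∀ x, ψ (-x) = -ψ x) (T t : ℝ) (hT : 0 ≤ T) (ht : T ≤ |t|) :
    (|t| - T) * ψ T ≤ ∫ s in (0:ℝ)..t, ψ s := by
  have key : ∀ r : ℝ, 0 ≤ r → T ≤ r → (r - T) * ψ T ≤ ∫ s in (0:ℝ)..r, ψ s := by
    intro r _ hTr
    have hint : ∀ a b : ℝ, IntervalIntegrable ψ MeasureTheory.volume a b :=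
      fun a b => hc.intervalIntegrable a b
    have hsplit : (∫ s in (0:ℝ)..T, ψ s) + (∫ s in T..r, ψ s) = ∫ s in (0:ℝ)..r, ψ s :=
      intervalIntegral.integral_add_adjacent_intervals (hint 0 T) (hint T r)
    have h1 : 0 ≤ ∫ s in (0:ℝ)..T, ψ s := by
      apply intervalIntegral.integral_nonneg hT
      intro x hx
      calc (0:ℝ) = ψ 0 := h0.symm
        _ ≤ ψ x := hm hx.1
    have h2 : (∫ s in T..r, (fun _ => ψ T) s) ≤ ∫ s in T..r, ψ s :=
      intervalIntegral.integral_mono_on hTr (intervalIntegrable_const) (hint T r)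
        (fun x hx => hm hx.1)
    rw [intervalIntegral.integral_const, smul_eq_mul] at h2
    linarith
  rcases le_or_gt 0 t with h | h
  · rw [abs_of_nonneg h] at ht ⊢
    exact key t h ht
  · have heq : (∫ s in (0:ℝ)..t, ψ s) = ∫ s in (0:ℝ)..(-t), ψ s := by
      have h1 : (∫ x in (0:ℝ)..(-t), ψ (-x)) = ∫ x in t..(0:ℝ), ψ x := by
        simpa using (intervalIntegral.integral_comp_neg (a := (0:ℝ)) (b := -t) (f := ψ))
      have h2 : (∫ x in (0:ℝ)..(-t), ψ (-x)) = -∫ x in (0:ℝ)..(-t), ψ x := by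
        simp [hodd, intervalIntegral.integral_neg]
      have h3 : (∫ x in t..(0:ℝ), ψ x) = -∫ x in (0:ℝ)..t, ψ x :=
        intervalIntegral.integral_symm 0 t
      linarith
    rw [abs_of_neg h] at ht ⊢
    rw [heq]
    exact key (-t) (by linarith) ht

/-- A bound on potential differences along a weak connectivity chain. -/
lemma chain_bound {V A : Type} (src tgt : A → V) {u v : V}
    (h : Relation.ReflTransGen
      (fun x y => ∃ a : A, (src a = x ∧ tgt a = y) ∨ (src a = y ∧ tgt a = x)) u v) :
    ∃ n : ℕ, ∀ (π : V → ℝ) (M : ℝ), 0 ≤ M →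
      (∀ a, |π (src a) - π (tgt a)| ≤ M) → |π u - π v| ≤ n * M := by
  induction h with
  | refl => exact ⟨0, fun π M hM _ => by simp⟩
  | @tail w x hrw harc ih =>
    obtain ⟨n, hn⟩ := ih
    refine ⟨n + 1, fun π M hM hb => ?_⟩
    obtain ⟨a, ha⟩ := harc
    have h1 : |π w - π x| ≤ M := by
      rcases ha with ⟨hs, ht⟩ | ⟨hs, ht⟩
      · rw [← hs, ← ht]; exact hb a
      · rw [abs_sub_comm, ← hs, ← ht]; exact hb a
    have h2 : |π u - π x| ≤ |π u - π w| + |π w - π x| := abs_sub_le _ _ _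
    have h3 := hn π M hM hb
    push_cast
    linarith

set_option maxHeartbeats 1000000 in
/-- On a weakly connected graph with continuous, strictly increasing, odd and
surjective potential functions, every balanced load scenario admits a
potential-based flow. -/
theorem potential_flow_exists {V A : Type} [Fintype V] [Fintype A] [DecidableEq V]
    (src tgt : A → V) (Φ : A → ℝ → ℝ)
    (hcont : ∀ a, Continuous (Φ a)) (hmono : ∀ a, StrictMono (Φ a))
    (hodd : ∀ a (x : ℝ), Φ a (-x) = -Φ a x)
    (hsurj : ∀ a, Function.Surjective (Φ a))
    (hconn : WeakConn src tgt)
    (d : V → ℝ) (hbal : ∑ u : V, d u = 0) :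
    ∃ (q : A → ℝ) (π : V → ℝ), FlowCons src tgt q d ∧ PotCoup src tgt Φ q π := by
  classical
  rcases isEmpty_or_nonempty A with hA | hA
  · -- no arcs: the graph being connected forces `V` to be a subsingleton, so `d = 0`
    have hsub : ∀ x y : V, x = y := by
      intro x y
      induction hconn x y with
      | refl => rfl
      | tail _ harc ih =>
        obtain ⟨a, _⟩ := harc
        exact (hA.elim a)
    refine ⟨fun _ => 0, fun _ => 0, fun u => ?_, fun a => (hA.elim a)⟩
    have hdu : ∑ v : V, d v = d u := by
      rw [Finset.sum_eq_single_of_mem u (Finset.mem_univ u)]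
      intro b _ hb
      exact absurd (hsub b u) hb
    simp only [Finset.univ_eq_empty, Finset.sum_empty]
    rw [hbal] at hdu
    linarith
  · -- main case
    have hANe : (Finset.univ : Finset A).Nonempty := Finset.univ_nonempty
    haveI hV : Nonempty V := ⟨src (Classical.arbitrary A)⟩
    -- inverse functions
    set ψ : A → ℝ → ℝ :=
      fun a => ((hmono a).orderIsoOfSurjective (Φ a) (hsurj a)).symm with hψdef
    have hΦ0 : ∀ a, Φ a 0 = 0 := by
      intro a
      have := hodd a 0
      simp only [neg_zero] at this
      linarith
    have hψΦ : ∀ a x, ψ a (Φ a x) = x := fun a x =>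
      StrictMono.orderIsoOfSurjective_symm_apply_self (Φ a) (hmono a) (hsurj a) x
    have hΦψ : ∀ a y, Φ a (ψ a y) = y := fun a y =>
      StrictMono.orderIsoOfSurjective_self_symm_apply (Φ a) (hmono a) (hsurj a) y
    have hψc : ∀ a, Continuous (ψ a) := fun a => OrderIso.continuous _
    have hψm : ∀ a, Monotone (ψ a) := fun a => (OrderIso.monotone _)
    have hψsm : ∀ a, StrictMono (ψ a) := fun a => (OrderIso.strictMono _)
    have hψ0 : ∀ a, ψ a 0 = 0 := fun a => by
      conv_lhs => rw [← hΦ0 a]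
      exact hψΦ a 0
    have hψodd : ∀ a (y : ℝ), ψ a (-y) = -ψ a y := by
      intro a y
      have h1 : Φ a (-(ψ a y)) = -y := by rw [hodd, hΦψ]
      calc ψ a (-y) = ψ a (Φ a (-(ψ a y))) := by rw [h1]
        _ = -(ψ a y) := hψΦ a _
    have hψsurj : ∀ a, Function.Surjective (ψ a) :=
      fun a x => ⟨Φ a x, hψΦ a x⟩
    -- primitives
    set Ψ : A → ℝ → ℝ := fun a t => ∫ s in (0:ℝ)..t, ψ a s with hΨdef
    have hΨderiv : ∀ a t, HasDerivAt (Ψ a) (ψ a t) t := fun a t =>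
      ((hψc a).integral_hasStrictDerivAt 0 t).hasDerivAt
    have hΨcont : ∀ a, Continuous (Ψ a) := fun a =>
      continuous_iff_continuousAt.2 fun t => (hΨderiv a t).continuousAt
    have hΨ0 : ∀ a, Ψ a 0 = 0 := fun a => intervalIntegral.integral_same
    have hΨnonneg : ∀ a t, 0 ≤ Ψ a t := by
      intro a t
      have := primitive_lower (hψc a) (hψm a) (hψ0 a) (hψodd a) 0 t le_rfl (abs_nonneg t)
      simpa [hψ0 a] using this
    -- the energy functional
    set E : (V → ℝ) → ℝ :=
      fun π => (∑ a : A, Ψ a (π (src a) - π (tgt a))) + ∑ u : V, d u * π u with hEdef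
    have hEcont : Continuous E := by
      apply Continuous.add
      · exact continuous_finset_sum _ fun a _ =>
          (hΨcont a).comp ((continuous_apply (src a)).sub (continuous_apply (tgt a)))
      · exact continuous_finset_sum _ fun u _ => continuous_const.mul (continuous_apply u)
    have hE0 : E (0 : V → ℝ) = 0 := by
      simp [hEdef, hΨ0]
    have hEshift : ∀ (π : V → ℝ) (c : ℝ), E (fun v => π v - c) = E π := by
      intro π c
      simp only [hEdef]
      congr 1
      · apply Finset.sum_congr rfl
        intro a _
        congr 1
        ring
      · have : ∀ v : V, d v * (π v - c) = d v * π v - d v * c := fun v => by ring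
        simp only [this, Finset.sum_sub_distrib, ← Finset.sum_mul, hbal, zero_mul, sub_zero]
    -- constants
    set K : ℝ := ∑ u : V, |d u| with hKdef
    have hK0 : 0 ≤ K := Finset.sum_nonneg fun u _ => abs_nonneg _
    choose N hN using fun p : V × V => chain_bound src tgt (hconn p.1 p.2)
    set C : ℕ := Finset.univ.sup (fun p : V × V => N p) with hCdef
    have hCb : ∀ u v : V, N (u, v) ≤ C := fun u v => Finset.le_sup (Finset.mem_univ (u, v))
    have hnormbound : ∀ (π : V → ℝ) (M : ℝ), 0 ≤ M → (∑ v : V, π v = 0) →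
        (∀ a, |π (src a) - π (tgt a)| ≤ M) → ∀ u, |π u| ≤ (C : ℝ) * M := by
      intro π M hM hsum hb u
      have hcard : (0:ℝ) < (Fintype.card V : ℝ) := by
        exact_mod_cast Fintype.card_pos
      have h1 : (Fintype.card V : ℝ) * π u = ∑ v : V, (π u - π v) := by
        rw [Finset.sum_sub_distrib, hsum, sub_zero, Finset.sum_const, Finset.card_univ,
          nsmul_eq_mul]
      have h2 : |(Fintype.card V : ℝ) * π u| ≤ ∑ v : V, |π u - π v| := by
        rw [h1]; exact Finset.abs_sum_le_sum_abs _ _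
      have h3 : ∑ v : V, |π u - π v| ≤ ∑ _v : V, (C : ℝ) * M := by
        apply Finset.sum_le_sum
        intro v _
        calc |π u - π v| ≤ (N (u, v) : ℝ) * M := hN (u, v) π M hM hb
          _ ≤ (C : ℝ) * M := by
            apply mul_le_mul_of_nonneg_right _ hM
            exact_mod_cast hCb u v
      rw [Finset.sum_const, Finset.card_univ, nsmul_eq_mul] at h3
      rw [abs_mul, abs_of_pos hcard] at h2
      have := le_trans h2 h3
      exact (mul_le_mul_iff_right₀ hcard).mp this
    -- choice of the threshold T
    choose t ht using fun a => hψsurj a (K * (C : ℝ) + 1)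
    have htpos : ∀ a, 0 ≤ t a := by
      intro a
      by_contra hcon
      push_neg at hcon
      have h1 : ψ a (t a) < ψ a 0 := hψsm a hcon
      rw [hψ0 a, ht a] at h1
      nlinarith
    set T : ℝ := Finset.univ.sup' hANe t with hTdef
    have hT0 : 0 ≤ T :=
      le_trans (htpos (Classical.arbitrary A)) (Finset.le_sup' t (Finset.mem_univ _))
    have hψT : ∀ a, K * (C : ℝ) + 1 ≤ ψ a T := by
      intro a
      rw [← ht a]
      exact hψm a (Finset.le_sup' t (Finset.mem_univ a))
    -- coercivity
    set R : ℝ := (C : ℝ) * (T + T * (K * (C : ℝ) + 1)) with hRdef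
    have hR0 : 0 ≤ R := by positivity
    have hcoercive : ∀ π : V → ℝ, (∑ v : V, π v = 0) → E π ≤ 0 → ‖π‖ ≤ R := by
      intro π hsum hEneg
      set M : ℝ := Finset.univ.sup' hANe (fun a => |π (src a) - π (tgt a)|) with hMdef
      have hMb : ∀ a, |π (src a) - π (tgt a)| ≤ M :=
        fun a => Finset.le_sup' (fun a => |π (src a) - π (tgt a)|) (Finset.mem_univ a)
      have hM0 : 0 ≤ M :=
        le_trans (abs_nonneg _) (hMb (Classical.arbitrary A))
      have hπb : ∀ u, |π u| ≤ (C : ℝ) * M := hnormbound π M hM0 hsum hMb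
      have hlin : -(K * ((C:ℝ) * M)) ≤ ∑ u : V, d u * π u := by
        have h1 : |∑ u : V, d u * π u| ≤ ∑ u : V, |d u| * ((C:ℝ) * M) := by
          calc |∑ u : V, d u * π u| ≤ ∑ u : V, |d u * π u| := Finset.abs_sum_le_sum_abs _ _
            _ ≤ ∑ u : V, |d u| * ((C:ℝ) * M) := by
                apply Finset.sum_le_sum
                intro u _
                rw [abs_mul]
                exact mul_le_mul_of_nonneg_left (hπb u) (abs_nonneg _)
        rw [← Finset.sum_mul] at h1
        have := neg_abs_le (∑ u : V, d u * π u)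
        calc -(K * ((C:ℝ) * M)) ≤ -|∑ u : V, d u * π u| := by
              rw [neg_le_neg_iff]
              exact h1
          _ ≤ ∑ u : V, d u * π u := this
      have hMbound : M ≤ T + T * (K * (C : ℝ) + 1) := by
        by_contra hcon
        push_neg at hcon
        have hC0 : (0:ℝ) ≤ (C : ℝ) := Nat.cast_nonneg C
        have hKC : (0:ℝ) ≤ K * (C:ℝ) + 1 := by nlinarith
        have hMT : T ≤ M := by nlinarith [mul_nonneg hT0 hKC]
        obtain ⟨a₀, -, ha₀⟩ :=
          Finset.exists_mem_eq_sup' hANe (fun a => |π (src a) - π (tgt a)|)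
        have hlow : (M - T) * ψ a₀ T ≤ Ψ a₀ (π (src a₀) - π (tgt a₀)) := by
          have := primitive_lower (hψc a₀) (hψm a₀) (hψ0 a₀) (hψodd a₀) T
            (π (src a₀) - π (tgt a₀)) hT0 (by rw [← ha₀]; exact hMT)
          rw [← ha₀] at this
          exact this
        have hsumΨ : Ψ a₀ (π (src a₀) - π (tgt a₀)) ≤
            ∑ a : A, Ψ a (π (src a) - π (tgt a)) :=
          Finset.single_le_sum (f := fun a => Ψ a (π (src a) - π (tgt a)))
            (fun a _ => hΨnonneg a _) (Finset.mem_univ a₀)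
        have hEexp : E π = (∑ a : A, Ψ a (π (src a) - π (tgt a))) + ∑ u : V, d u * π u := rfl
        have hψTb : K * (C : ℝ) + 1 ≤ ψ a₀ T := hψT a₀
        have hprod : (M - T) * (K * (C : ℝ) + 1) ≤ (M - T) * ψ a₀ T :=
          mul_le_mul_of_nonneg_left hψTb (by linarith)
        rw [hEexp] at hEneg
        nlinarith
      rw [pi_norm_le_iff_of_nonneg hR0]
      intro u
      rw [Real.norm_eq_abs]
      calc |π u| ≤ (C : ℝ) * M := hπb u
        _ ≤ R := by
            rw [hRdef]
            apply mul_le_mul_of_nonneg_left hMbound (by positivity)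
    -- existence of a minimizer
    set S : Set (V → ℝ) := {π | ∑ v : V, π v = 0} ∩ {π | E π ≤ 0} with hSdef
    have hS0 : (0 : V → ℝ) ∈ S := ⟨by simp, le_of_eq hE0⟩
    have hSclosed : IsClosed S :=
      IsClosed.inter
        (isClosed_eq (continuous_finset_sum _ fun v _ => continuous_apply v) continuous_const)
        (isClosed_le hEcont continuous_const)
    have hSsub : S ⊆ Metric.closedBall 0 R := by
      intro π hπ
      rw [Metric.mem_closedBall, dist_zero_right]
      exact hcoercive π hπ.1 hπ.2
    have hScompact : IsCompact S :=
      (isCompact_closedBall (0 : V → ℝ) R).of_isClosed_subset hSclosed hSsub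
    obtain ⟨π₀, hπ₀S, hπ₀min⟩ := hScompact.exists_isMinOn ⟨0, hS0⟩ hEcont.continuousOn
    have hcardV : ((Fintype.card V : ℝ)) ≠ 0 := by
      exact_mod_cast Fintype.card_ne_zero
    have hglobal : ∀ π : V → ℝ, E π₀ ≤ E π := by
      intro π
      set c : ℝ := (∑ v : V, π v) / (Fintype.card V : ℝ) with hcdef
      have hsum' : ∑ v : V, (π v - c) = 0 := by
        rw [Finset.sum_sub_distrib, Finset.sum_const, Finset.card_univ, nsmul_eq_mul, hcdef]
        field_simp
        ring
      have hE' : E (fun v => π v - c) = E π := hEshift π c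
      by_cases h : E (fun v => π v - c) ≤ 0
      · have := isMinOn_iff.1 hπ₀min _ ⟨hsum', h⟩
        linarith
      · have h1 := isMinOn_iff.1 hπ₀min _ hS0
        rw [hE0] at h1
        linarith
    -- the flow
    set q : A → ℝ := fun a => ψ a (π₀ (src a) - π₀ (tgt a)) with hqdef
    refine ⟨q, π₀, ?_, fun a => (hΦψ a _).symm⟩
    intro u
    set ε : A → ℝ :=
      fun a => (if src a = u then (1:ℝ) else 0) - (if tgt a = u then (1:ℝ) else 0) with hεdef
    set g : ℝ → ℝ := fun c =>
      (∑ a : A, Ψ a ((π₀ (src a) - π₀ (tgt a)) + c * ε a)) +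
        ((∑ v : V, d v * π₀ v) + c * d u) with hgdef
    have hg : ∀ c : ℝ, g c = E (fun v => π₀ v + c * (if v = u then (1:ℝ) else 0)) := by
      intro c
      simp only [hgdef, hEdef]
      congr 1
      · apply Finset.sum_congr rfl
        intro a _
        congr 1
        simp only [hεdef]
        ring
      · have h1 : ∀ v : V, d v * (π₀ v + c * (if v = u then (1:ℝ) else 0))
            = d v * π₀ v + (if v = u then d v * c else 0) := by
          intro v
          split_ifs <;> ring
        rw [Finset.sum_congr rfl fun v _ => h1 v, Finset.sum_add_distrib,
          Finset.sum_ite_eq' Finset.univ u (fun v => d v * c)]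
        simp [mul_comm]
    have hgderiv : HasDerivAt g
        ((∑ a : A, ψ a (π₀ (src a) - π₀ (tgt a)) * ε a) + d u) 0 := by
      apply HasDerivAt.add
      · apply HasDerivAt.fun_sum
        intro a _
        have h1 : HasDerivAt (fun c : ℝ => (π₀ (src a) - π₀ (tgt a)) + c * ε a) (ε a) 0 := by
          simpa using ((hasDerivAt_id (0:ℝ)).mul_const (ε a)).const_add
            (π₀ (src a) - π₀ (tgt a))
        have h2 := (hΨderiv a ((π₀ (src a) - π₀ (tgt a)) + 0 * ε a)).comp 0 h1
        simpa [Function.comp_def] using h2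
      · simpa using ((hasDerivAt_id (0:ℝ)).mul_const (d u)).const_add (∑ v : V, d v * π₀ v)
    have hπeq : (fun v => π₀ v + (0:ℝ) * (if v = u then (1:ℝ) else 0)) = π₀ :=
      funext fun v => by simp
    have hg0 : g 0 = E π₀ := by rw [hg 0, hπeq]
    have hgmin : ∀ c : ℝ, g 0 ≤ g c := by
      intro c
      rw [hg0, hg c]
      exact hglobal (fun v => π₀ v + c * (if v = u then (1:ℝ) else 0))
    have hmin : IsLocalMin g 0 := Filter.Eventually.of_forall hgmin
    have hzero := hmin.hasDerivAt_eq_zero hgderiv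
    have hexp : ∑ a : A, ψ a (π₀ (src a) - π₀ (tgt a)) * ε a
        = (∑ a : A, if src a = u then q a else 0) - (∑ a : A, if tgt a = u then q a else 0) := by
      rw [← Finset.sum_sub_distrib]
      apply Finset.sum_congr rfl
      intro a _
      simp only [hεdef, hqdef, mul_sub, mul_ite, mul_one, mul_zero]
    rw [hexp] at hzero
    linarith
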